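/- Suppose A : ℝ × V × Ω → V* satisfies the growth/coercivity conditions: 2⟨A(t,v;ω), v⟩ ≤ C₁(t)‖v‖_H² − c(t)‖v‖_V^α + f(t) and ‖A(t,v;ω)‖_{V*}^(α/(α-1)) ≤ C₁(t)‖v‖_H² + C₂(t)‖v‖_V^α + f(t), with 1 < α < 2. Fix a path N : ℝ → V and set A_ω(t,v) := A(t, v + N_t; ω). Then A_ω satisfies a coercivity estimate of the same form: 2⟨A_ω(t,v), v⟩ ≤ C̃₁(t)‖v‖_H² − c̃(t)‖v‖_V^α + f̃(t), where C̃₁(t) = 2C₁(t)(1+ε₁), c̃(t) = 2^{1-α}(c(t) − ε₁C₂(t)) for any sufficiently small ε₁ > 0, and f̃(t) = (1+ε₁)f(t) + (C_{ε₁} + c(t) − ε₁C₂(t))‖N_t‖_V^α + 2C₁(t)(1+ε₁)‖N_t‖_H². -/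

import Mathlib

open Set

private lemma aux_two_rpow {a b p : ℝ} (ha : 0 ≤ a) (hb : 0 ≤ b) (hp : 1 ≤ p) :
    (a + b) ^ p ≤ 2 ^ (p - 1) * (a ^ p + b ^ p) := by
  have h := NNReal.rpow_add_le_mul_rpow_add_rpow a.toNNReal b.toNNReal hp
  have h' := NNReal.coe_le_coe.2 h
  push_cast [NNReal.coe_rpow, Real.coe_toNNReal _ ha, Real.coe_toNNReal _ hb] at h'
  convert h' using 3

private lemma young_weighted {p q ε : ℝ} (hpq : p.HolderConjugate q) (hε : 0 < ε)
    {a b : ℝ} (ha : 0 ≤ a) (hb : 0 ≤ b) :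
    a * b ≤ ε * a ^ p + (ε * p) ^ (1 - q) / q * b ^ q := by
  have hεp : 0 < ε * p := mul_pos hε hpq.pos
  have h := Real.young_inequality_of_nonneg
    (mul_nonneg (Real.rpow_nonneg hεp.le p⁻¹) ha)
    (mul_nonneg (Real.rpow_nonneg hεp.le (-p⁻¹)) hb) hpq
  have e1 : ((ε * p) ^ p⁻¹ * a) ^ p = (ε * p) * a ^ p := by
    rw [Real.mul_rpow (Real.rpow_nonneg hεp.le _) ha, ← Real.rpow_mul hεp.le,
      inv_mul_cancel₀ hpq.ne_zero, Real.rpow_one]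
  have e2 : ((ε * p) ^ (-p⁻¹) * b) ^ q = (ε * p) ^ (1 - q) * b ^ q := by
    rw [Real.mul_rpow (Real.rpow_nonneg hεp.le _) hb, ← Real.rpow_mul hεp.le]
    congr 2
    have h1 : p⁻¹ = 1 - q⁻¹ := by
      have := (Real.holderConjugate_iff.mp hpq).2; linarith
    rw [h1, neg_mul, sub_mul, one_mul, inv_mul_cancel₀ hpq.symm.ne_zero]
    ring
  have e3 : (ε * p) ^ p⁻¹ * a * ((ε * p) ^ (-p⁻¹) * b) = a * b := by
    have hone : (ε * p) ^ p⁻¹ * (ε * p) ^ (-p⁻¹) = 1 := by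
      rw [← Real.rpow_add hεp]; simp
    calc (ε * p) ^ p⁻¹ * a * ((ε * p) ^ (-p⁻¹) * b)
        = ((ε * p) ^ p⁻¹ * (ε * p) ^ (-p⁻¹)) * (a * b) := by ring
      _ = a * b := by rw [hone, one_mul]
  rw [e3, e1, e2] at h
  calc a * b ≤ ε * p * a ^ p / p + (ε * p) ^ (1 - q) * b ^ q / q := h
    _ = ε * a ^ p + (ε * p) ^ (1 - q) / q * b ^ q := by
        field_simp [hpq.ne_zero]

private lemma C1_nonneg_aux {α C₁ C₂ F nw niw : ℝ} (hα1 : 1 < α) (hα2 : α < 2) (hF : 0 ≤ F)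
    (hniw : 0 < niw) (hnw : 0 ≤ nw)
    (hkey : ∀ s : ℝ, 0 < s → 0 ≤ C₁ * (s ^ (2:ℝ) * niw) + C₂ * (s ^ α * nw) + F) :
    0 ≤ C₁ := by
  by_contra hneg
  push_neg at hneg
  set a : ℝ := -C₁ * niw with ha_def
  have ha : 0 < a := mul_pos (neg_pos.2 hneg) hniw
  set b : ℝ := |C₂| * nw with hb_def
  have hb : 0 ≤ b := by positivity
  have key' : ∀ s : ℝ, 0 < s → a * s ^ (2:ℝ) ≤ b * s ^ α + F := by
    intro s hs
    have h := hkey s hs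
    have h2 : C₂ * (s ^ α * nw) ≤ b * s ^ α := by
      have : C₂ ≤ |C₂| := le_abs_self _
      have hsa : 0 ≤ s ^ α * nw := mul_nonneg (Real.rpow_nonneg hs.le _) hnw
      nlinarith [Real.rpow_nonneg hs.le α]
    nlinarith
  set s : ℝ := 1 + max ((4 * b / a) ^ (2 - α)⁻¹) (Real.sqrt (4 * F / a)) with hs_def
  have hs1 : (1:ℝ) ≤ s :=
    le_add_of_nonneg_right
      (le_max_of_le_left (Real.rpow_nonneg (by positivity) _))
  have hs0 : 0 < s := lt_of_lt_of_le one_pos hs1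
  have hsplit : s ^ (2:ℝ) = s ^ α * s ^ (2 - α) := by
    rw [← Real.rpow_add hs0]; norm_num
  have h1 : b * s ^ α ≤ a / 4 * s ^ (2:ℝ) := by
    have hle : (4 * b / a) ^ (2 - α)⁻¹ ≤ s := by
      have := le_max_left ((4 * b / a) ^ (2 - α)⁻¹) (Real.sqrt (4 * F / a))
      linarith
    have h2α : (0:ℝ) < 2 - α := by linarith
    have hmono : 4 * b / a ≤ s ^ (2 - α) := by
      calc 4 * b / a = ((4 * b / a) ^ (2 - α)⁻¹) ^ (2 - α) := by
            rw [Real.rpow_inv_rpow (by positivity) (ne_of_gt h2α)]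
        _ ≤ s ^ (2 - α) :=
            Real.rpow_le_rpow (Real.rpow_nonneg (by positivity) _) hle h2α.le
    have hb' : b ≤ a / 4 * s ^ (2 - α) := by
      rw [div_le_iff₀ ha] at hmono
      nlinarith
    rw [hsplit]
    have := Real.rpow_nonneg hs0.le α
    nlinarith
  have h2 : F ≤ a / 4 * s ^ (2:ℝ) := by
    have hle : Real.sqrt (4 * F / a) ≤ s := by
      have := le_max_right ((4 * b / a) ^ (2 - α)⁻¹) (Real.sqrt (4 * F / a))
      linarith
    have hFa : 4 * F / a ≤ s ^ (2:ℝ) := by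
      rw [Real.rpow_two]
      calc 4 * F / a = Real.sqrt (4 * F / a) ^ 2 := (Real.sq_sqrt (by positivity)).symm
        _ ≤ s ^ 2 := by
            have := Real.sqrt_nonneg (4 * F / a)
            nlinarith
    rw [div_le_iff₀ ha] at hFa
    nlinarith
  have := key' s hs0
  have hs2 : 0 < s ^ (2:ℝ) := Real.rpow_pos_of_pos hs0 _
  nlinarith

/-- The shifted operator `A_ω(t,v) := A(t, v + N_t)` satisfies a coercivity estimate of
the same form as `A`, with the explicit transformed coefficients. -/
theorem shifted_operator_coercivity
    {V H : Type*} [NormedAddCommGroup V] [NormedSpace ℝ V]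
    [NormedAddCommGroup H] [InnerProductSpace ℝ H] [CompleteSpace H]
    (ι : V →L[ℝ] H) (hι_inj : Function.Injective ι) (hι_dense : DenseRange ι)
    (α : ℝ) (hα1 : 1 < α) (hα2 : α < 2)
    (A : ℝ → V → StrongDual ℝ V)
    (C₁ C₂ c f : ℝ → ℝ) (hc_pos : ∀ t, 0 < c t)
    (hcoerc : ∀ t : ℝ, ∀ v : V,
      2 * A t v v ≤ C₁ t * ‖ι v‖ ^ 2 - c t * ‖v‖ ^ α + f t)
    (hgrowth : ∀ t : ℝ, ∀ v : V,
      ‖A t v‖ ^ (α / (α - 1)) ≤ C₁ t * ‖ι v‖ ^ 2 + C₂ t * ‖v‖ ^ α + f t)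
    (N : ℝ → V) :
    ∀ ε₁ > (0:ℝ), (∀ t, ε₁ * C₂ t ≤ c t) →
      ∃ Cε > (0:ℝ), ∀ t : ℝ, ∀ v : V,
        2 * A t (v + N t) v ≤
          (2 * C₁ t * (1 + ε₁)) * ‖ι v‖ ^ 2
          - ((2:ℝ) ^ (1 - α) * (c t - ε₁ * C₂ t)) * ‖v‖ ^ α
          + ((1 + ε₁) * f t + (Cε + c t - ε₁ * C₂ t) * ‖N t‖ ^ α
              + 2 * C₁ t * (1 + ε₁) * ‖ι (N t)‖ ^ 2) := by
  intro ε₁ hε₁ hεC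
  have hα0 : (0:ℝ) < α := by linarith
  have hα1' : (0:ℝ) < α - 1 := by linarith
  set p : ℝ := α / (α - 1) with hp_def
  have hpq : p.HolderConjugate α := by
    rw [Real.holderConjugate_iff]; constructor
    · rw [hp_def]; exact (one_lt_div hα1').2 (by linarith)
    · rw [hp_def]; field_simp; ring
  have hppos : 0 < p := hpq.pos
  -- f is nonnegative
  have hf : ∀ t, 0 ≤ f t := by
    intro t
    have h := hgrowth t 0
    simp only [map_zero, norm_zero, Real.zero_rpow (ne_of_gt hα0), mul_zero, zero_pow,
      ne_eq, OfNat.ofNat_ne_zero, not_false_eq_true, zero_add] at h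
    exact le_trans (Real.rpow_nonneg (norm_nonneg _) _) h
  -- the key C₁-estimate
  have hC1 : ∀ t : ℝ, ∀ x y : V,
      C₁ t * ‖ι x + ι y‖ ^ 2 ≤ 2 * C₁ t * (‖ι x‖ ^ 2 + ‖ι y‖ ^ 2) := by
    intro t x y
    have hnorm : ‖ι x + ι y‖ ^ 2 ≤ 2 * (‖ι x‖ ^ 2 + ‖ι y‖ ^ 2) := by
      have h := norm_add_le (ι x) (ι y)
      nlinarith [norm_nonneg (ι x), norm_nonneg (ι y), sq_nonneg (‖ι x‖ - ‖ι y‖),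
        norm_nonneg (ι x + ι y)]
    rcases subsingleton_or_nontrivial V with hV | hV
    · have hx : x = 0 := Subsingleton.elim _ _
      have hy : y = 0 := Subsingleton.elim _ _
      simp [hx, hy]
    · obtain ⟨w, hw⟩ := exists_ne (0 : V)
      have hιw : 0 < ‖ι w‖ ^ 2 := by
        have hne : ι w ≠ 0 := fun h => hw (hι_inj (by simpa using h))
        exact pow_pos (norm_pos_iff.2 hne) 2
      have hC : 0 ≤ C₁ t := by
        apply C1_nonneg_aux (C₂ := C₂ t) (nw := ‖w‖ ^ α) hα1 hα2 (hf t) hιw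
          (Real.rpow_nonneg (norm_nonneg w) α)
        intro s hs
        have h := hgrowth t (s • w)
        have e1 : ‖ι (s • w)‖ ^ 2 = s ^ (2:ℝ) * ‖ι w‖ ^ 2 := by
          rw [map_smul, norm_smul, Real.norm_eq_abs, abs_of_pos hs, mul_pow, Real.rpow_two]
        have e2 : ‖s • w‖ ^ α = s ^ α * ‖w‖ ^ α := by
          rw [norm_smul, Real.norm_eq_abs, abs_of_pos hs,
            Real.mul_rpow hs.le (norm_nonneg w)]
        rw [e1, e2] at h
        exact le_trans (Real.rpow_nonneg (norm_nonneg _) _) h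
      have := mul_le_mul_of_nonneg_left hnorm hC
      linarith
  refine ⟨(ε₁ * p) ^ (1 - α) * (2:ℝ) ^ α / α,
    div_pos (mul_pos (Real.rpow_pos_of_pos (mul_pos hε₁ hppos) _)
      (Real.rpow_pos_of_pos two_pos _)) hα0, ?_⟩
  intro t v
  set M := N t with hM
  set T := A t (v + M) with hT
  have hmap : ι (v + M) = ι v + ι M := map_add ι v M
  have hsum := hcoerc t (v + M)
  have hgro := hgrowth t (v + M)
  rw [hmap, ← hT] at hsum
  rw [hmap, ← hT] at hgro
  -- linearity of the pairing
  have hlin : T v = T (v + M) - T M := by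
    rw [← map_sub]; congr 1; abel
  -- bound on the cross term
  have habs : |T M| ≤ ‖T‖ * ‖M‖ := by
    simpa [Real.norm_eq_abs] using T.le_opNorm M
  have hyoung := young_weighted hpq hε₁ (norm_nonneg T)
    (mul_nonneg (by norm_num : (0:ℝ) ≤ 2) (norm_nonneg M))
  have h2M : (2 * ‖M‖) ^ α = (2:ℝ) ^ α * ‖M‖ ^ α :=
    Real.mul_rpow (by norm_num) (norm_nonneg M)
  rw [h2M] at hyoung
  have hgro' : ε₁ * ‖T‖ ^ p ≤ ε₁ * (C₁ t * ‖ι v + ι M‖ ^ 2 + C₂ t * ‖v + M‖ ^ α + f t) :=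
    mul_le_mul_of_nonneg_left hgro hε₁.le
  -- lower bound on ‖v + M‖^α
  have hVα : (2:ℝ) ^ (1 - α) * ‖v‖ ^ α ≤ ‖v + M‖ ^ α + ‖M‖ ^ α := by
    have hv : ‖v‖ ≤ ‖v + M‖ + ‖M‖ := by
      calc ‖v‖ = ‖(v + M) - M‖ := by congr 1; abel
        _ ≤ ‖v + M‖ + ‖M‖ := norm_sub_le _ _
    have h1 : ‖v‖ ^ α ≤ (‖v + M‖ + ‖M‖) ^ α :=
      Real.rpow_le_rpow (norm_nonneg v) hv hα0.le
    have h2 := aux_two_rpow (norm_nonneg (v + M)) (norm_nonneg M) hα1.le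
    have h3 : (2:ℝ) ^ (1 - α) * (2:ℝ) ^ (α - 1) = 1 := by
      rw [← Real.rpow_add two_pos]; norm_num
    calc (2:ℝ) ^ (1 - α) * ‖v‖ ^ α
        ≤ (2:ℝ) ^ (1 - α) * ((2:ℝ) ^ (α - 1) * (‖v + M‖ ^ α + ‖M‖ ^ α)) :=
          mul_le_mul_of_nonneg_left (le_trans h1 h2) (Real.rpow_nonneg (by norm_num) _)
      _ = ‖v + M‖ ^ α + ‖M‖ ^ α := by rw [← mul_assoc, h3, one_mul]
  have hcpos : 0 ≤ c t - ε₁ * C₂ t := by linarith [hεC t]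
  have hVα' := mul_le_mul_of_nonneg_left hVα hcpos
  have hH := hC1 t v M
  have hH' := mul_le_mul_of_nonneg_left hH (by linarith : (0:ℝ) ≤ 1 + ε₁)
  have hcross : -(2 * T M) ≤ ε₁ * ‖T‖ ^ p + (ε₁ * p) ^ (1 - α) / α * ((2:ℝ) ^ α * ‖M‖ ^ α) := by
    have h1 : -(2 * T M) ≤ ‖T‖ * (2 * ‖M‖) := by
      have := neg_abs_le (T M)
      nlinarith [norm_nonneg T, norm_nonneg M]
    linarith
  set D : ℝ := (ε₁ * p) ^ (1 - α) * (2:ℝ) ^ α / α with hD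
  have hDm : (ε₁ * p) ^ (1 - α) / α * ((2:ℝ) ^ α * ‖M‖ ^ α) = D * ‖M‖ ^ α := by
    rw [hD]; ring
  rw [hDm] at hcross
  rw [hlin]
  clear_value D p M T
  linarith [hsum, hcross, hgro', hH', hVα']
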